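/- Let X be a locally compact Hausdorff space, let E and F be real Banach spaces, let S : C₀(X,E) → F be a bounded linear operator, and let x ∈ X. Suppose that S(f) = 0 for every f ∈ C₀(X,E) with f(x) = 0. Then there exists a bounded linear operator h : E → F with ‖h‖ ≤ ‖S‖ such that S(f) = h(f(x)) for all f ∈ C₀(X,E). -/

import Mathlib

open ZeroAtInfty

/-- Factorization through evaluation: if a bounded linear operator `S : C₀(X, E) → F`
vanishes on every `f` with `f x = 0`, then `S = h ∘ δ_x` for some bounded linear operator
`h : E → F` with `‖h‖ ≤ ‖S‖`. -/
theorem factor_through_evaluation {X E F : Type*}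
    [TopologicalSpace X] [LocallyCompactSpace X] [T2Space X]
    [NormedAddCommGroup E] [NormedSpace ℝ E] [CompleteSpace E]
    [NormedAddCommGroup F] [NormedSpace ℝ F] [CompleteSpace F]
    (S : C₀(X, E) →L[ℝ] F) (x : X)
    (hker : ∀ f : C₀(X, E), f x = 0 → S f = 0) :
    ∃ h : E →L[ℝ] F, ‖h‖ ≤ ‖S‖ ∧ ∀ f : C₀(X, E), S f = h (f x) := by
  obtain ⟨g, hg1, -, hgcs, hg01⟩ :=
    exists_continuous_one_zero_of_isCompact (isCompact_singleton (x := x)) isClosed_empty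
      (Set.disjoint_empty _)
  have hgx : g x = 1 := hg1 rfl
  -- the function `t ↦ g t • e` as an element of C₀(X, E)
  set fe : E → C₀(X, E) := fun e =>
    ⟨⟨fun t => g t • e, (g.continuous.smul continuous_const)⟩,
      by simpa using (hgcs.is_zero_at_infty).smul_const e⟩ with hfe
  have hfe_apply : ∀ e t, fe e t = g t • e := fun e t => rfl
  have hfe_norm : ∀ e, ‖fe e‖ ≤ ‖e‖ := by
    intro e
    rw [← ZeroAtInftyContinuousMap.norm_toBCF_eq_norm]
    apply (BoundedContinuousFunction.norm_le (norm_nonneg e)).2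
    intro t
    show ‖g t • e‖ ≤ ‖e‖
    rw [norm_smul]
    have := hg01 t
    calc ‖g t‖ * ‖e‖ ≤ 1 * ‖e‖ := by
          apply mul_le_mul_of_nonneg_right _ (norm_nonneg e)
          rw [Real.norm_eq_abs, abs_le]; exact ⟨by linarith [this.1], this.2⟩
      _ = ‖e‖ := one_mul _
  have key : ∀ f : C₀(X, E), S f = S (fe (f x)) := by
    intro f
    have : S (f - fe (f x)) = 0 := by
      apply hker
      simp [hfe_apply, hgx]
    rw [map_sub, sub_eq_zero] at this
    exact this
  have hadd : ∀ e e', fe (e + e') = fe e + fe e' := by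
    intro e e'; ext t; simp [hfe_apply, smul_add]
  have hsmul : ∀ (c : ℝ) e, fe (c • e) = c • fe e := by
    intro c e; ext t
    show g t • (c • e) = c • (g t • e)
    rw [smul_comm]
  let h₀ : E →ₗ[ℝ] F :=
    { toFun := fun e => S (fe e)
      map_add' := fun e e' => by show S (fe (e + e')) = S (fe e) + S (fe e'); rw [hadd, map_add]
      map_smul' := fun c e => by simp only [RingHom.id_apply]; rw [hsmul, map_smul] }
  have hbound : ∀ e, ‖h₀ e‖ ≤ ‖S‖ * ‖e‖ := by
    intro e
    calc ‖S (fe e)‖ ≤ ‖S‖ * ‖fe e‖ := S.le_opNorm _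
      _ ≤ ‖S‖ * ‖e‖ := mul_le_mul_of_nonneg_left (hfe_norm e) (norm_nonneg S)
  refine ⟨h₀.mkContinuous ‖S‖ hbound, ?_, ?_⟩
  · exact LinearMap.mkContinuous_norm_le _ (norm_nonneg S) _
  · intro f
    exact key f
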